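/- arXiv:1703.05097 — 2 statements merged into one kernel-verified Lean document; each statement's English description precedes it below -/
import Mathlib

section
/- In a level-1 phylogenetic network N on a finite set X, for distinct taxa x, y ∈ X, every splitting ancestor v of x and y satisfies lca(x,y) ≺ v ⪯ lsa(x,y); in particular, v lies on the unique directed path from lsa(x,y) to lca(x,y). -/
open Relation
open List


section Helpers

variable {V : Type} {r : V → V → Prop}

lemma mem_of_head? {l : List V} {a : V} (h : l.head? = some a) : a ∈ l := by
  cases l with
  | nil => simp at h
  | cons x t => simp at h; simp [h]

lemma mem_of_getLast? {l : List V} {a : V} (h : l.getLast? = some a) : a ∈ l :=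
  List.mem_of_mem_getLast? (by simp [h])

lemma eq_cons_of_head? {l : List V} {a : V} (h : l.head? = some a) : l = a :: l.tail := by
  cases l with
  | nil => simp at h
  | cons x t => simp_all

lemma acyc_antisymm (hacyc : ∀ v, ¬ TransGen r v v) {a b : V}
    (h1 : ReflTransGen r a b) (h2 : ReflTransGen r b a) : a = b := by
  rcases h1.cases_head with h | ⟨c, hac, hcb⟩
  · exact h
  · exact absurd (Relation.TransGen.trans_right h2 (TransGen.head' hac hcb)) (hacyc b)

lemma chain'_rtg_head : ∀ {l : List V}, l.Chain' r → ∀ {s a : V},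
    l.head? = some s → a ∈ l → ReflTransGen r s a := by
  intro l
  induction l with
  | nil => intro _ s a h; simp at h
  | cons x t ih =>
    intro hc s a hs ha
    simp at hs; subst hs
    rcases List.mem_cons.mp ha with rfl | ha
    · exact ReflTransGen.refl
    · cases t with
      | nil => simp at ha
      | cons y t' =>
        rcases List.isChain_cons_cons.mp hc with ⟨hxy, hc'⟩
        exact ReflTransGen.head hxy (ih hc' rfl ha)

lemma chain'_rtg_last : ∀ {l : List V}, l.Chain' r → ∀ {t a : V},
    l.getLast? = some t → a ∈ l → ReflTransGen r a t := by
  intro l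
  induction l with
  | nil => intro _ t a h; simp at h
  | cons x rest ih =>
    intro hc t a hl ha
    cases rest with
    | nil =>
      simp at hl ha; subst hl; subst ha; exact ReflTransGen.refl
    | cons y t' =>
      rcases List.isChain_cons_cons.mp hc with ⟨hxy, hc'⟩
      have hl' : (y :: t').getLast? = some t := by
        rw [← hl, List.getLast?_cons_cons]
      rcases List.mem_cons.mp ha with rfl | ha
      · exact ReflTransGen.head hxy (ih hc' hl' List.mem_cons_self)
      · exact ih hc' hl' ha

lemma chain'_rtg_across {l₁ l₂ : List V} (h : (l₁ ++ l₂).Chain' r) {a b : V}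
    (ha : a ∈ l₁) (hb : b ∈ l₂) : ReflTransGen r a b := by
  obtain ⟨m₁, m₂, rfl⟩ := List.append_of_mem ha
  have hsuf : (a :: (m₂ ++ l₂)).Chain' r := by
    apply h.suffix
    rw [List.append_assoc, List.cons_append]
    exact ⟨m₁, by simp⟩
  exact chain'_rtg_head hsuf rfl (by simp [hb])

lemma chain'_nodup (hacyc : ∀ v, ¬ TransGen r v v) :
    ∀ {l : List V}, l.Chain' r → l.Nodup := by
  intro l
  induction l with
  | nil => intro _; simp
  | cons x t ih =>
    intro hc
    rw [List.nodup_cons]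
    refine ⟨?_, ih hc.tail⟩
    intro hx
    cases t with
    | nil => simp at hx
    | cons y t' =>
      rcases List.isChain_cons_cons.mp hc with ⟨hxy, hc'⟩
      exact hacyc x (TransGen.head' hxy (chain'_rtg_head hc' rfl hx))

lemma exists_last_prop {l : List V} {a : V} (P : V → Prop) (ha : a ∈ l) (hPa : P a) :
    ∃ l₁ x l₂, l = l₁ ++ x :: l₂ ∧ P x ∧ ∀ e ∈ l₂, ¬ P e := by
  classical
  have ha' : ∃ x ∈ l, P x := ⟨a, ha, hPa⟩
  clear ha hPa
  induction l with
  | nil => simp at ha'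
  | cons c t ih =>
    by_cases h : ∃ x ∈ t, P x
    · obtain ⟨l₁, z, l₂, rfl, hPz, hl₂⟩ := ih h
      exact ⟨c :: l₁, z, l₂, by simp, hPz, hl₂⟩
    · push_neg at h
      obtain ⟨x, hx, hPx⟩ := ha'
      have hac : x = c := by
        rcases List.mem_cons.mp hx with rfl | hx'
        · rfl
        · exact absurd hPx (h x hx')
      subst hac
      exact ⟨[], x, t, by simp, hPx, h⟩

lemma exists_first_prop {l : List V} {a : V} (P : V → Prop) (ha : a ∈ l) (hPa : P a) :
    ∃ l₁ x l₂, l = l₁ ++ x :: l₂ ∧ P x ∧ ∀ e ∈ l₁, ¬ P e := by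
  classical
  induction l with
  | nil => simp at ha
  | cons c t ih =>
    by_cases hc : P c
    · exact ⟨[], c, t, by simp, hc, by simp⟩
    · have ha' : a ∈ t := by
        rcases List.mem_cons.mp ha with rfl | h
        · exact absurd hPa hc
        · exact h
      obtain ⟨l₁, z, l₂, rfl, hPz, hl₁⟩ := ih ha'
      refine ⟨c :: l₁, z, l₂, by simp, hPz, ?_⟩
      intro e he
      rcases List.mem_cons.mp he with rfl | he'
      · exact hc
      · exact hl₁ e he'

lemma mem_split_pair {l : List V} {a b : V} (ha : a ∈ l) (hb : b ∈ l) (hab : a ≠ b) :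
    (∃ l₁ l₂ l₃, l = l₁ ++ a :: l₂ ++ b :: l₃) ∨
    (∃ l₁ l₂ l₃, l = l₁ ++ b :: l₂ ++ a :: l₃) := by
  obtain ⟨m₁, m₂, rfl⟩ := List.append_of_mem ha
  rcases List.mem_append.mp hb with hb1 | hb2
  · obtain ⟨k₁, k₂, rfl⟩ := List.append_of_mem hb1
    right
    exact ⟨k₁, k₂, m₂, by simp⟩
  · rcases List.mem_cons.mp hb2 with rfl | hb2'
    · exact absurd rfl hab
    · obtain ⟨k₁, k₂, rfl⟩ := List.append_of_mem hb2'
      left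
      exact ⟨m₁, k₁, k₂, by simp⟩

end Helpers

open Relation List

section GraphHelpers

variable {V : Type} {G : SimpleGraph V}

lemma walk_of_list : ∀ (l : List V), l.Chain' G.Adj → ∀ (a b : V),
    l.head? = some a → l.getLast? = some b → ∃ W : G.Walk a b, W.support = l := by
  intro l
  induction l with
  | nil => intro _ a b h; simp at h
  | cons x t ih =>
    intro hc a b ha hb
    simp at ha; subst ha
    cases t with
    | nil =>
      simp at hb; subst hb
      exact ⟨SimpleGraph.Walk.nil, rfl⟩
    | cons y t' =>
      rcases List.isChain_cons_cons.mp hc with ⟨hxy, hc'⟩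
      rw [List.getLast?_cons_cons] at hb
      obtain ⟨W', hW'⟩ := ih hc' y b rfl hb
      exact ⟨SimpleGraph.Walk.cons hxy W', by simp [hW']⟩

lemma isPath_edge_ends : ∀ {a b : V} (W : G.Walk a b), W.IsPath →
    s(a, b) ∈ W.edges → W.length = 1 := by
  intro a b W
  induction W with
  | nil => intro _ he; simp at he
  | @cons a x b h W' ih =>
    intro hp he
    have hp' := (SimpleGraph.Walk.cons_isPath_iff h W').mp hp
    rw [SimpleGraph.Walk.edges_cons, List.mem_cons] at he
    rcases he with he | he
    · rw [Sym2.eq_iff] at he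
      rcases he with ⟨-, rfl⟩ | ⟨rfl, rfl⟩
      · cases W' with
        | nil => simp
        | cons h' W'' =>
          exact absurd (SimpleGraph.Walk.end_mem_support W'')
            ((SimpleGraph.Walk.cons_isPath_iff h' W'').mp hp'.1).2
      · exact absurd (SimpleGraph.Walk.start_mem_support W') hp'.2
    · exact absurd (SimpleGraph.Walk.fst_mem_support_of_mem_edges W' he) hp'.2

end GraphHelpers


/-- A rooted phylogenetic network on a finite taxa set `X` with vertex type `V`:
a finite simple acyclic digraph with a unique root (indegree 0, reaching every
vertex), no vertices with indegree 1 and outdegree 1, whose leaves (outdegree-0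
vertices) are bijectively labelled by `X`. -/
structure PhyloNetwork (V X : Type) [Fintype V] [Fintype X] where
  /-- arc relation of the digraph -/
  Adj : V → V → Prop
  /-- acyclicity: no directed cycle -/
  acyclic : ∀ v, ¬ Relation.TransGen Adj v v
  /-- the root -/
  root : V
  /-- the root has indegree 0 -/
  root_no_parent : ∀ u, ¬ Adj u root
  /-- every vertex is reachable from the root by a directed path -/
  root_reaches : ∀ v, Relation.ReflTransGen Adj root v
  /-- no vertex has indegree 1 and outdegree 1 -/
  no_degenerate : ∀ v, ¬ ({u | Adj u v}.ncard = 1 ∧ {u | Adj v u}.ncard = 1)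
  /-- the leaves are bijectively labelled by the taxa in `X` -/
  label : X ≃ {v : V // ∀ u, ¬ Adj v u}

namespace PhyloNetwork

variable {V X : Type} [Fintype V] [Fintype X] (N : PhyloNetwork V X)

/-- a leaf is a vertex of outdegree 0 -/
def IsLeaf (v : V) : Prop := ∀ u, ¬ N.Adj v u

/-- the leaf labelled by taxon `x` -/
def leaf (x : X) : V := (N.label x).val

/-- `u` is below `v` (equivalently, `v` is above `u`): there is a directed
path from `v` to `u` -/
def below (u v : V) : Prop := Relation.ReflTransGen N.Adj v u

/-- `u` is strictly below `v` -/
def strictlyBelow (u v : V) : Prop := N.below u v ∧ u ≠ v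

/-- the cluster of a vertex: the set of taxa labelling the leaves below it -/
def cluster (v : V) : Set X := {x | N.below (N.leaf x) v}

/-- a common ancestor of a set `Y` of taxa -/
def CommonAncestor (Y : Set X) (v : V) : Prop := Y ⊆ N.cluster v

/-- a lowest common ancestor (LCA) of `Y`: a common ancestor of `Y` such that
no other common ancestor of `Y` is strictly below it -/
def IsLCA (Y : Set X) (v : V) : Prop :=
  N.CommonAncestor Y v ∧ ∀ u, N.CommonAncestor Y u → ¬ N.strictlyBelow u v

/-- `p` is a directed path from `u` to `v`, recorded as its list of vertices -/
def IsDipath (p : List V) (u v : V) : Prop :=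
  p ≠ [] ∧ p.head? = some u ∧ p.getLast? = some v ∧ p.Chain' N.Adj ∧ p.Nodup

/-- the arc `(a, b)` is traversed by the path `p` -/
def ArcIn (p : List V) (a b : V) : Prop := (a, b) ∈ p.zip p.tail

/-- a stable ancestor of `Y`: a vertex contained in every directed path from
the root to some taxon in `Y` -/
def StableAncestor (Y : Set X) (v : V) : Prop :=
  ∀ x ∈ Y, ∀ p : List V, N.IsDipath p N.root (N.leaf x) → v ∈ p

/-- the lowest stable ancestor (LSA) of `Y`: the stable ancestor of `Y`
that is below every stable ancestor of `Y` -/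
def IsLSA (Y : Set X) (w : V) : Prop :=
  N.StableAncestor Y w ∧ ∀ v, N.StableAncestor Y v → N.below w v

/-- the underlying undirected graph of the network -/
def underlying : SimpleGraph V := SimpleGraph.fromRel N.Adj

/-- indegree of a vertex -/
noncomputable def inDeg (v : V) : ℕ := {u | N.Adj u v}.ncard

/-- outdegree of a vertex -/
noncomputable def outDeg (v : V) : ℕ := {u | N.Adj v u}.ncard

/-- binary network: every non-leaf vertex has indegree at most 2 and
outdegree at most 2, and every vertex of indegree 2 has outdegree 1 -/
def Binary : Prop :=
  (∀ v, ¬ N.IsLeaf v → N.inDeg v ≤ 2 ∧ N.outDeg v ≤ 2) ∧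
  (∀ v, N.inDeg v = 2 → N.outDeg v = 1)

/-- level-1 network: binary, and any two cycles of the underlying undirected
graph are vertex-disjoint (i.e. any two cycles sharing a vertex have the same
vertex set) -/
def Level1 : Prop :=
  N.Binary ∧ ∀ (u v : V) (c₁ : N.underlying.Walk u u) (c₂ : N.underlying.Walk v v),
    c₁.IsCycle → c₂.IsCycle → ∀ w, w ∈ c₁.support → w ∈ c₂.support →
      ∀ z, (z ∈ c₁.support ↔ z ∈ c₂.support)

/-- a cut arc: an arc whose removal disconnects the underlying undirected graph -/
def CutArc (a b : V) : Prop :=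
  N.Adj a b ∧ ¬ (SimpleGraph.fromRel (fun u v => N.Adj u v ∧ ¬ (u = a ∧ v = b))).Connected

/-- a splitting ancestor of distinct taxa `x` and `y`: a (non-leaf) vertex such
that precisely one taxon from `{x, y}` is below both of its children, while the
other taxon is below exactly one of its two children -/
def SplittingAncestor (x y : X) (v : V) : Prop :=
  ∃ c₁ c₂, c₁ ≠ c₂ ∧ N.Adj v c₁ ∧ N.Adj v c₂ ∧
    ((N.below (N.leaf x) c₁ ∧ N.below (N.leaf x) c₂ ∧
        Xor' (N.below (N.leaf y) c₁) (N.below (N.leaf y) c₂)) ∨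
     (N.below (N.leaf y) c₁ ∧ N.below (N.leaf y) c₂ ∧
        Xor' (N.below (N.leaf x) c₁) (N.below (N.leaf x) c₂)))

/-- saturated level-1 network: each non-leaf vertex is contained in a cycle of
size three of the underlying undirected graph -/
def Saturated : Prop :=
  ∀ v, ¬ N.IsLeaf v → ∃ c : N.underlying.Walk v v, c.IsCycle ∧ c.length = 3

/-- the multiset of clusters induced by the vertices of the network -/
noncomputable def clusterMultiset : Multiset (Set X) :=
  (Finset.univ : Finset V).val.map N.cluster

/-- the Robinson–Foulds distance: the size of the symmetric difference of the
multisets of clusters of the two networks -/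
noncomputable def rfDist {V V' X : Type} [Fintype V] [Fintype V'] [Fintype X]
    (N : PhyloNetwork V X) (N' : PhyloNetwork V' X) : ℕ :=
  letI : DecidableEq (Set X) := Classical.decEq _
  ((N.clusterMultiset - N'.clusterMultiset) +
    (N'.clusterMultiset - N.clusterMultiset)).card


section DipathLemmas

lemma adj_ne {a b : V} (h : N.Adj a b) : a ≠ b := by
  rintro rfl
  exact N.acyclic a (Relation.TransGen.single h)

lemma rtg_antisymm {a b : V} (h1 : ReflTransGen N.Adj a b) (h2 : ReflTransGen N.Adj b a) :
    a = b := acyc_antisymm N.acyclic h1 h2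

lemma dipath_mk {l : List V} {s t : V} (hne : l ≠ []) (hh : l.head? = some s)
    (hl : l.getLast? = some t) (hc : l.Chain' N.Adj) : N.IsDipath l s t :=
  ⟨hne, hh, hl, hc, chain'_nodup N.acyclic hc⟩

lemma dipath_mem_head {l : List V} {s t a : V} (h : N.IsDipath l s t) (ha : a ∈ l) :
    ReflTransGen N.Adj s a := chain'_rtg_head h.2.2.2.1 h.2.1 ha

lemma dipath_mem_last {l : List V} {s t a : V} (h : N.IsDipath l s t) (ha : a ∈ l) :
    ReflTransGen N.Adj a t := chain'_rtg_last h.2.2.2.1 h.2.2.1 ha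

lemma dipath_cons {c t v : V} {l : List V} (hv : N.Adj v c) (h : N.IsDipath l c t) :
    N.IsDipath (v :: l) v t := by
  obtain ⟨hne, hh, hl, hc, hnd⟩ := h
  refine ⟨by simp, rfl, ?_, ?_, ?_⟩
  · cases l with
    | nil => simp at hne
    | cons x xs => rw [List.getLast?_cons_cons]; exact hl
  · refine List.isChain_cons.mpr ⟨?_, hc⟩
    intro y hy
    rw [hh] at hy
    simp at hy; subst hy; exact hv
  · rw [List.nodup_cons]
    refine ⟨?_, hnd⟩
    intro hmem
    exact N.acyclic v (Relation.TransGen.head' hv (chain'_rtg_head hc hh hmem))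

lemma dipath_exists {s t : V} (h : ReflTransGen N.Adj s t) : ∃ l, N.IsDipath l s t := by
  induction h using ReflTransGen.head_induction_on with
  | refl => exact ⟨[t], N.dipath_mk (by simp) rfl rfl (List.isChain_singleton _)⟩
  | head hac _ ih =>
    obtain ⟨l, hl⟩ := ih
    exact ⟨_ :: l, N.dipath_cons hac hl⟩

lemma dipath_glue {l₁ l₂ : List V} {s v t : V} (h₁ : N.IsDipath l₁ s v)
    (h₂ : N.IsDipath l₂ v t) : N.IsDipath (l₁.dropLast ++ l₂) s t := by
  obtain ⟨hne₁, hh₁, hl₁, hc₁, hnd₁⟩ := h₁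
  have hsplit : l₁.dropLast ++ [v] = l₁ :=
    List.dropLast_append_getLast? v (by rw [hl₁]; rfl)
  obtain ⟨hne₂, hh₂, hl₂, hc₂, hnd₂⟩ := h₂
  refine ⟨by simp [hne₂], ?_, ?_, ?_, ?_⟩
  · rw [← hsplit] at hh₁
    cases hdl : l₁.dropLast with
    | nil =>
      rw [hdl] at hh₁; simp at hh₁
      simp [hh₂, hh₁]
    | cons x xs =>
      rw [hdl] at hh₁
      simp at hh₁ ⊢
      exact hh₁
  · rw [List.getLast?_append_of_ne_nil _ hne₂]; exact hl₂
  · rw [← hsplit] at hc₁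
    rcases List.isChain_append.mp hc₁ with ⟨hcd, -, hjunc⟩
    refine List.isChain_append.mpr ⟨hcd, hc₂, ?_⟩
    intro x hx y hy
    rw [hh₂] at hy; simp at hy; subst hy
    exact hjunc x hx v (by simp)
  · rw [List.nodup_append]
    have hvd : v ∉ l₁.dropLast := by
      rw [← hsplit] at hnd₁
      rcases List.nodup_append.mp hnd₁ with ⟨-, -, hdisj⟩
      intro hmem
      exact hdisj v hmem v (by simp) rfl
    refine ⟨hnd₁.sublist (List.dropLast_sublist l₁), hnd₂, ?_⟩
    intro x hx y hx₂ hxy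
    subst hxy
    have h1 : ReflTransGen N.Adj x v :=
      chain'_rtg_last hc₁ hl₁ (List.mem_of_mem_dropLast hx)
    have h2 : ReflTransGen N.Adj v x := chain'_rtg_head hc₂ hh₂ hx₂
    have : x = v := N.rtg_antisymm h1 h2
    subst this
    exact hvd hx

end DipathLemmas

section ThetaCycle

lemma adj_underlying {a b : V} (h : N.Adj a b) : N.underlying.Adj a b :=
  (SimpleGraph.fromRel_adj _ _ _).mpr ⟨N.adj_ne h, Or.inl h⟩

lemma thetaCycle {s t z : V} {p₁ p₂ Q : List V}
    (hP : N.IsDipath (p₁ ++ z :: p₂) s t) (hQ : N.IsDipath Q s t) (hz : z ∉ Q) :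
    ∃ (c : V) (C : N.underlying.Walk c c) (d m : V), C.IsCycle ∧ z ∈ C.support ∧
      d ∈ C.support ∧ m ∈ C.support ∧ d ∈ p₁ ∧ d ∈ Q ∧ m ∈ p₂ ∧ m ∈ Q ∧
      ∀ x ∈ C.support, x ∈ p₁ ++ z :: p₂ ∨ x ∈ Q := by
  obtain ⟨hPne, hPh, hPl, hPc, hPnd⟩ := hP
  obtain ⟨hQne, hQh, hQl, hQc, hQnd⟩ := hQ
  have hsQ : s ∈ Q := _root_.mem_of_head? hQh
  have htQ : t ∈ Q := _root_.mem_of_getLast? hQl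
  have hp₁ne : p₁ ≠ [] := by
    rintro rfl
    simp at hPh
    exact hz (hPh ▸ hsQ)
  have hPl' : (p₁ ++ [z]) ++ p₂ = p₁ ++ z :: p₂ := by simp
  have hp₂ne : p₂ ≠ [] := by
    rintro rfl
    rw [← hPl', List.append_nil, List.getLast?_concat] at hPl
    simp at hPl
    exact hz (hPl ▸ htQ)
  have hsp₁ : s ∈ p₁ := by
    cases p₁ with
    | nil => exact absurd rfl hp₁ne
    | cons a p₁' => simp at hPh; simp [hPh]
  have htp₂ : t ∈ p₂ := by
    rw [← hPl', List.getLast?_append_of_ne_nil _ hp₂ne] at hPl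
    exact _root_.mem_of_getLast? hPl
  obtain ⟨a₁, d, a₂, hp₁eq, hdQ, ha₂⟩ := exists_last_prop (· ∈ Q) hsp₁ hsQ
  obtain ⟨b₁, m, b₂, hp₂eq, hmQ, hb₁⟩ := exists_first_prop (· ∈ Q) htp₂ htQ
  subst hp₁eq hp₂eq
  have hdz : ReflTransGen N.Adj d z := by
    refine chain'_rtg_across (l₁ := a₁ ++ d :: a₂) (l₂ := z :: (b₁ ++ m :: b₂)) ?_
      (by simp) (by simp)
    exact hPc
  have hzm : ReflTransGen N.Adj z m := by
    refine chain'_rtg_across (l₁ := (a₁ ++ d :: a₂) ++ [z]) (l₂ := b₁ ++ m :: b₂) ?_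
      (by simp) (by simp)
    simpa using hPc
  have hdm : ReflTransGen N.Adj d m := hdz.trans hzm
  have hdz' : d ≠ z := fun h => hz (h ▸ hdQ)
  have hzm' : z ≠ m := fun h => hz (h ▸ hmQ)
  have hdm' : d ≠ m := by
    rintro rfl
    exact hdz' (N.rtg_antisymm hdz hzm)
  rcases mem_split_pair hdQ hmQ hdm' with ⟨q₁, q₂, q₃, hQeq⟩ | ⟨q₁, q₂, q₃, hQeq⟩
  swap
  · exfalso
    have hmd : ReflTransGen N.Adj m d := by
      refine chain'_rtg_across (l₁ := q₁ ++ m :: q₂) (l₂ := d :: q₃) ?_ (by simp) (by simp)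
      rw [hQeq] at hQc
      simpa using hQc
    exact hdm' (N.rtg_antisymm hdm hmd)
  -- main case : Q = q₁ ++ d :: q₂ ++ m :: q₃
  have hq₂Q : ∀ x ∈ q₂, x ∈ Q := by intro x hx; rw [hQeq]; simp [hx]
  set Pmid : List V := a₂ ++ z :: b₁ with hPmiddef
  have hPmidP : ∀ x ∈ Pmid, x ∈ (a₁ ++ d :: a₂) ++ z :: (b₁ ++ m :: b₂) := by
    intro x hx
    simp only [hPmiddef, List.mem_append, List.mem_cons] at hx ⊢
    tauto
  have hPmidQ : ∀ x ∈ Pmid, x ∉ Q := by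
    intro x hx
    simp only [hPmiddef, List.mem_append, List.mem_cons] at hx
    rcases hx with hx | rfl | hx
    · exact ha₂ x hx
    · exact hz
    · exact hb₁ x hx
  have hzPmid : z ∈ Pmid := by simp [hPmiddef]
  -- the P-side segment
  have hPseg : Chain' N.Adj (d :: (Pmid ++ [m])) ∧ (d :: (Pmid ++ [m])).Nodup := by
    have hinf : (d :: (Pmid ++ [m])) <:+: (a₁ ++ d :: a₂) ++ z :: (b₁ ++ m :: b₂) :=
      ⟨a₁, b₂, by simp [hPmiddef]⟩
    exact ⟨hPc.infix hinf, hPnd.sublist hinf.sublist⟩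
  -- the Q-side segment
  have hQseg : Chain' N.Adj (d :: (q₂ ++ [m])) ∧ (d :: (q₂ ++ [m])).Nodup := by
    have hinf : (d :: (q₂ ++ [m])) <:+: Q := ⟨q₁, q₃, by simp [hQeq]⟩
    exact ⟨hQc.infix hinf, hQnd.sublist hinf.sublist⟩
  have hdPmid : d ∉ Pmid := by
    have := hPseg.2
    rw [List.nodup_cons] at this
    intro h; exact this.1 (by simp [h])
  have hmPmid : m ∉ Pmid := by
    have := hPseg.2
    rw [List.nodup_cons] at this
    have h2 := this.2
    rw [List.nodup_append] at h2
    intro h; exact h2.2.2 m h m (by simp) rfl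
  have hdq₂ : d ∉ q₂ := by
    have := hQseg.2
    rw [List.nodup_cons] at this
    intro h; exact this.1 (by simp [h])
  have hmq₂ : m ∉ q₂ := by
    have := hQseg.2
    rw [List.nodup_cons] at this
    have h2 := this.2
    rw [List.nodup_append] at h2
    intro h; exact h2.2.2 m h m (by simp) rfl
  have hq₂nd : q₂.Nodup := by
    have := hQseg.2
    rw [List.nodup_cons, List.nodup_append] at this
    exact this.2.1
  -- the walk list
  set WalkList : List V := (Pmid ++ [m]) ++ (d :: q₂).reverse with hWLdef
  obtain ⟨x₀, Pmid', hPm⟩ : ∃ x₀ Pmid', Pmid = x₀ :: Pmid' := by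
    cases h : Pmid with
    | nil => rw [h] at hzPmid; simp at hzPmid
    | cons a b => exact ⟨a, b, rfl⟩
  have hchainPm : Chain' N.underlying.Adj (Pmid ++ [m]) :=
    (hPseg.1.tail).imp (fun _ _ h => N.adj_underlying h)
  have hchainQrev : Chain' N.underlying.Adj ((d :: q₂).reverse) := by
    refine List.isChain_reverse.mpr ?_
    have : Chain' N.Adj (d :: q₂) := hQseg.1.prefix ⟨[m], by simp⟩
    exact this.imp (fun _ _ h => (N.adj_underlying h).symm)
  have hjunc : ∀ x ∈ (d :: q₂).getLast?, N.Adj x m := by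
    have : Chain' N.Adj ((d :: q₂) ++ [m]) := by
      have := hQseg.1; simpa using this
    rcases List.isChain_append.mp this with ⟨-, -, hj⟩
    intro x hx
    exact hj x hx m (by simp)
  have hchainW : Chain' N.underlying.Adj WalkList := by
    refine List.isChain_append.mpr ⟨hchainPm, hchainQrev, ?_⟩
    intro x hx y hy
    rw [List.getLast?_concat] at hx
    simp at hx
    subst hx
    rw [List.head?_reverse] at hy
    exact (N.adj_underlying (hjunc y hy)).symm
  have hheadW : WalkList.head? = some x₀ := by
    rw [hWLdef, hPm]
    simp
  have hlastW : WalkList.getLast? = some d := by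
    rw [hWLdef, List.getLast?_append_of_ne_nil _ (by simp), List.getLast?_reverse]
    simp
  obtain ⟨W, hWsup⟩ := walk_of_list WalkList hchainW x₀ d hheadW hlastW
  have hnodW : WalkList.Nodup := by
    rw [hWLdef, List.nodup_append]
    refine ⟨hPseg.2.of_cons, by rw [List.nodup_reverse]; exact List.nodup_cons.mpr ⟨hdq₂, hq₂nd⟩, ?_⟩
    intro x hx y hx' hxy
    subst hxy
    rw [List.mem_reverse, List.mem_cons] at hx'
    rw [List.mem_append] at hx
    rcases hx with hx | hx
    · rcases hx' with rfl | hx'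
      · exact hdPmid hx
      · exact hPmidQ x hx (hq₂Q x hx')
    · simp at hx
      subst hx
      rcases hx' with rfl | hx'
      · exact hdm' rfl
      · exact hmq₂ hx'
  have hWpath : W.IsPath := (SimpleGraph.Walk.isPath_def W).mpr (by rw [hWsup]; exact hnodW)
  have hGdx₀ : N.underlying.Adj d x₀ := by
    rcases List.isChain_cons.mp hPseg.1 with ⟨h0, -⟩
    exact N.adj_underlying (h0 x₀ (by rw [hPm]; simp))
  have hedge : s(d, x₀) ∉ W.edges := by
    intro hmem
    have hlen := isPath_edge_ends W hWpath (by rwa [Sym2.eq_swap])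
    have hls := congrArg List.length hWsup
    rw [SimpleGraph.Walk.length_support, hlen, hWLdef, hPm] at hls
    simp at hls
    omega
  refine ⟨d, SimpleGraph.Walk.cons hGdx₀ W, d, m,
    (SimpleGraph.Walk.cons_isCycle_iff W hGdx₀).mpr ⟨hWpath, hedge⟩, ?_, ?_, ?_, ?_, hdQ, ?_, hmQ, ?_⟩
  · rw [SimpleGraph.Walk.support_cons, hWsup, hWLdef]
    simp only [List.mem_cons, List.mem_append]
    exact Or.inr (Or.inl (Or.inl hzPmid))
  · rw [SimpleGraph.Walk.support_cons]; simp
  · rw [SimpleGraph.Walk.support_cons, hWsup, hWLdef]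
    simp
  · simp
  · simp
  · intro x hx
    rw [SimpleGraph.Walk.support_cons, hWsup, hWLdef] at hx
    simp only [List.mem_cons, List.mem_append, List.mem_reverse] at hx
    rcases hx with rfl | hx
    · left; simp
    · rcases hx with (hx | hx) | hx
      · exact Or.inl (hPmidP x hx)
      · simp at hx; subst hx; exact Or.inr hmQ
      · rcases hx with rfl | hx'
        · exact Or.inr hdQ
        · exact Or.inr (hq₂Q x hx')

end ThetaCycle

section Core

lemma core (hN : N.Level1) (a b : X) (u w v cg cb : V)
    (hu : N.IsLCA {a, b} u) (hw : N.IsLSA {a, b} w)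
    (hne : cg ≠ cb) (hg : N.Adj v cg) (hb : N.Adj v cb)
    (hacb : N.below (N.leaf a) cb) (hacg : N.below (N.leaf a) cg)
    (hbcg : N.below (N.leaf b) cg) (hbcb : ¬ N.below (N.leaf b) cb) :
    N.strictlyBelow u v ∧ N.below v w ∧ ∀ p : List V, N.IsDipath p w u → v ∈ p := by
  have hav : ReflTransGen N.Adj v (N.leaf a) := ReflTransGen.head hb hacb
  have hbv : ReflTransGen N.Adj v (N.leaf b) := ReflTransGen.head hg hbcg
  have hCAv : N.CommonAncestor {a, b} v := by
    rintro x (rfl | rfl)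
    · exact hav
    · exact hbv
  have hCAcg : N.CommonAncestor {a, b} cg := by
    rintro x (rfl | rfl)
    · exact hacg
    · exact hbcg
  have hau : ReflTransGen N.Adj u (N.leaf a) := hu.1 (by left; rfl)
  have hbu : ReflTransGen N.Adj u (N.leaf b) := hu.1 (by right; rfl)
  -- construct the cycle C1 through v and cb
  obtain ⟨pb, hpb⟩ := N.dipath_exists hacb
  obtain ⟨pg, hpg⟩ := N.dipath_exists hacg
  have hPb : N.IsDipath (v :: pb) v (N.leaf a) := N.dipath_cons hb hpb
  have hPg : N.IsDipath (v :: pg) v (N.leaf a) := N.dipath_cons hg hpg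
  have hvpg : v ∉ pg := fun h =>
    N.acyclic v (Relation.TransGen.head' hg (chain'_rtg_head hpg.2.2.2.1 hpg.2.1 h))
  obtain ⟨c₀, C1, hC1cyc, hvC1, hcbC1⟩ :
      ∃ (c₀ : V) (C1 : N.underlying.Walk c₀ c₀), C1.IsCycle ∧ v ∈ C1.support ∧
        cb ∈ C1.support := by
    by_cases hcb : cb ∈ v :: pg
    · have hcbv : cb ≠ v := (N.adj_ne hb).symm
      have hcbpg : cb ∈ pg := (List.mem_cons.mp hcb).resolve_left hcbv
      obtain ⟨g₁, g₂, hgeq⟩ := List.append_of_mem hcbpg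
      obtain ⟨g₁', rfl⟩ : ∃ g₁', g₁ = cg :: g₁' := by
        cases g₁ with
        | nil =>
          exfalso
          have := hpg.2.1
          rw [hgeq] at this
          simp at this
          exact hne this.symm
        | cons e g₁' =>
          have := hpg.2.1
          rw [hgeq] at this
          simp at this
          exact ⟨g₁', by rw [this]⟩
      have hP' : N.IsDipath ([v] ++ cg :: (g₁' ++ [cb])) v cb := by
        refine N.dipath_mk (by simp) (by simp) ?_ ?_
        · have : ([v] ++ cg :: (g₁' ++ [cb])) = (v :: cg :: g₁') ++ [cb] := by simp
          rw [this, List.getLast?_concat]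
        · refine (hPg.2.2.2.1).prefix ⟨g₂, ?_⟩
          simp [hgeq]
      have hQ' : N.IsDipath [v, cb] v cb :=
        N.dipath_mk (by simp) rfl rfl (List.isChain_pair.mpr hb)
      have hzQ' : cg ∉ ([v, cb] : List V) := by
        simp only [List.mem_cons, List.not_mem_nil, or_false]
        push_neg
        exact ⟨(N.adj_ne hg).symm, hne⟩
      obtain ⟨c₀, C, d, m, hcyc, hzC, hdC, hmC, hdp₁, -, hmp₂, hmQ, -⟩ :=
        N.thetaCycle hP' hQ' hzQ'
      have hd : d = v := by simpa using hdp₁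
      have hm : m = cb := by
        rcases List.mem_cons.mp hmQ with rfl | hmQ'
        · exfalso
          apply hvpg
          rw [hgeq]
          rcases List.mem_append.mp hmp₂ with h | h
          · simp [h]
          · simp at h
            exact absurd h.symm hcbv
        · simpa using hmQ'
      exact ⟨c₀, C, hcyc, hd ▸ hdC, hm ▸ hmC⟩
    · have hpbeq : pb = cb :: pb.tail := eq_cons_of_head? hpb.2.1
      have hP' : N.IsDipath ([v] ++ cb :: pb.tail) v (N.leaf a) := by
        have heq : ([v] ++ cb :: pb.tail) = v :: pb := by rw [← hpbeq]; rfl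
        rw [heq]
        exact hPb
      obtain ⟨c₀, C, d, m, hcyc, hzC, hdC, hmC, hdp₁, -, -, -, -⟩ :=
        N.thetaCycle hP' hPg hcb
      have hd : d = v := by simpa using hdp₁
      exact ⟨c₀, C, hcyc, hd ▸ hdC, hzC⟩
  -- the key contradiction machine
  have key : ∀ (c₂ : V) (C2 : N.underlying.Walk c₂ c₂), C2.IsCycle → v ∈ C2.support →
      (∀ x ∈ C2.support, ReflTransGen N.Adj x (N.leaf b)) → False := by
    intro c₂ C2 hcyc hvC2 hall
    have hiff := hN.2 c₀ c₂ C1 C2 hC1cyc hcyc v hvC1 hvC2 cb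
    exact hbcb (hall cb (hiff.mp hcbC1))
  have hne_uv : u ≠ v := by
    rintro rfl
    exact hu.2 cg hCAcg ⟨ReflTransGen.single hg, fun h => N.adj_ne hg h.symm⟩
  have hnvu : ¬ N.strictlyBelow v u := hu.2 v hCAv
  have huv : ReflTransGen N.Adj v u := by
    by_contra hnuv
    obtain ⟨Ru, hRu⟩ := N.dipath_exists (N.root_reaches u)
    obtain ⟨puy, hpuy⟩ := N.dipath_exists hbu
    have hQ : N.IsDipath (Ru.dropLast ++ puy) N.root (N.leaf b) := N.dipath_glue hRu hpuy
    have hvQ : v ∉ Ru.dropLast ++ puy := by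
      intro h
      rcases List.mem_append.mp h with h | h
      · exact hnuv (N.dipath_mem_last hRu (List.mem_of_mem_dropLast h))
      · exact hnvu ⟨N.dipath_mem_head hpuy h, fun hvu => hne_uv hvu.symm⟩
    obtain ⟨R, hR⟩ := N.dipath_exists (N.root_reaches v)
    obtain ⟨pgy, hpgy⟩ := N.dipath_exists hbcg
    have hP : N.IsDipath (R.dropLast ++ v :: pgy) N.root (N.leaf b) :=
      N.dipath_glue hR (N.dipath_cons hg hpgy)
    obtain ⟨c₂, C2, d, m, hcyc, hvC2, -, -, -, -, -, -, hcov⟩ := N.thetaCycle hP hQ hvQ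
    refine key c₂ C2 hcyc hvC2 ?_
    intro x hx
    rcases hcov x hx with hx | hx
    · rcases List.mem_append.mp hx with h | h
      · exact (N.dipath_mem_last hR (List.mem_of_mem_dropLast h)).trans hbv
      · rcases List.mem_cons.mp h with rfl | h
        · exact hbv
        · exact N.dipath_mem_last hpgy h
    · rcases List.mem_append.mp hx with h | h
      · exact (N.dipath_mem_last hRu (List.mem_of_mem_dropLast h)).trans hbu
      · exact N.dipath_mem_last hpuy h
  have hvw : ReflTransGen N.Adj w v := by
    obtain ⟨R, hR⟩ := N.dipath_exists (N.root_reaches v)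
    have hP1 : N.IsDipath (R.dropLast ++ v :: pb) N.root (N.leaf a) := N.dipath_glue hR hPb
    have hwP1 : w ∈ R.dropLast ++ v :: pb := hw.1 a (by left; rfl) _ hP1
    rcases List.mem_append.mp hwP1 with h | h
    · exact N.dipath_mem_last hR (List.mem_of_mem_dropLast h)
    rcases List.mem_cons.mp h with rfl | h
    · exact ReflTransGen.refl
    have hwb : ReflTransGen N.Adj cb w := N.dipath_mem_head hpb h
    have hP2 : N.IsDipath (R.dropLast ++ v :: pg) N.root (N.leaf a) := N.dipath_glue hR hPg
    have hwP2 : w ∈ R.dropLast ++ v :: pg := hw.1 a (by left; rfl) _ hP2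
    rcases List.mem_append.mp hwP2 with h2 | h2
    · exact N.dipath_mem_last hR (List.mem_of_mem_dropLast h2)
    rcases List.mem_cons.mp h2 with rfl | h2
    · exact ReflTransGen.refl
    obtain ⟨pgy, hpgy⟩ := N.dipath_exists hbcg
    have hP3 : N.IsDipath (R.dropLast ++ v :: pgy) N.root (N.leaf b) :=
      N.dipath_glue hR (N.dipath_cons hg hpgy)
    have hwP3 : w ∈ R.dropLast ++ v :: pgy := hw.1 b (by right; rfl) _ hP3
    exfalso
    rcases List.mem_append.mp hwP3 with h3 | h3
    · have h4 : ReflTransGen N.Adj w v := N.dipath_mem_last hR (List.mem_of_mem_dropLast h3)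
      exact N.acyclic v (Relation.TransGen.head' hb (hwb.trans h4))
    rcases List.mem_cons.mp h3 with h3 | h3
    · exact N.acyclic v (Relation.TransGen.head' hb (h3 ▸ hwb))
    · exact hbcb (hwb.trans (N.dipath_mem_last hpgy h3))
  refine ⟨⟨huv, hne_uv⟩, hvw, ?_⟩
  intro p hp
  by_contra hvp
  have hstep : ∃ c, N.Adj v c ∧ ReflTransGen N.Adj c u := by
    rcases huv.cases_head with h | h
    · exact absurd h.symm hne_uv
    · exact h
  obtain ⟨c, hvc, hcu⟩ := hstep
  have hcmem : c = cg ∨ c = cb := by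
    have hnl : ¬ N.IsLeaf v := fun h => h cg hg
    have hdeg := (hN.1.1 v hnl).2
    have hsub : ({cg, cb} : Set V) ⊆ {z | N.Adj v z} := by
      rintro z (rfl | rfl)
      · exact hg
      · exact hb
    have heq := Set.eq_of_subset_of_ncard_le hsub
      (by rw [Set.ncard_pair hne]; exact hdeg) (Set.toFinite _)
    have : c ∈ ({cg, cb} : Set V) := by rw [heq]; exact hvc
    simpa using this
  have hccg : c = cg := by
    rcases hcmem with rfl | rfl
    · rfl
    · exact absurd (hcu.trans hbu) hbcb
  subst hccg
  obtain ⟨pcu, hpcu⟩ := N.dipath_exists hcu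
  obtain ⟨Rwv, hRwv⟩ := N.dipath_exists hvw
  have hP : N.IsDipath (Rwv.dropLast ++ v :: pcu) w u :=
    N.dipath_glue hRwv (N.dipath_cons hg hpcu)
  obtain ⟨c₂, C2, d, m, hcyc, hvC2, -, -, -, -, -, -, hcov⟩ := N.thetaCycle hP hp hvp
  refine key c₂ C2 hcyc hvC2 ?_
  intro x hx
  rcases hcov x hx with hx | hx
  · rcases List.mem_append.mp hx with h | h
    · exact (N.dipath_mem_last hRwv (List.mem_of_mem_dropLast h)).trans hbv
    · rcases List.mem_cons.mp h with rfl | h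
      · exact hbv
      · exact (N.dipath_mem_last hpcu h).trans hbu
  · exact (N.dipath_mem_last hp hx).trans hbu

end Core



end PhyloNetwork

/-- In a level-1 phylogenetic network `N` on a finite set `X`, for
distinct taxa `x, y ∈ X`, every splitting ancestor `v` of `x` and `y` satisfies
`lca(x,y) ≺ v ⪯ lsa(x,y)`; in particular, `v` lies on the unique directed path
from `lsa(x,y)` to `lca(x,y)`. -/
theorem splitting_ancestor_between_lca_lsa {V X : Type} [Fintype V] [Fintype X]
    (N : PhyloNetwork V X) (hN : N.Level1) (x y : X) (hxy : x ≠ y)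
    (u w v : V) (hu : N.IsLCA {x, y} u) (hw : N.IsLSA {x, y} w)
    (hv : N.SplittingAncestor x y v) :
    N.strictlyBelow u v ∧ N.below v w ∧
      ∀ p : List V, N.IsDipath p w u → v ∈ p := by
  obtain ⟨c₁, c₂, hc, h1, h2, hcase⟩ := hv
  rcases hcase with ⟨hx1, hx2, hxor⟩ | ⟨hy1, hy2, hxor⟩
  · rcases hxor with ⟨hg', hn⟩ | ⟨hg', hn⟩
    · exact N.core hN x y u w v c₁ c₂ hu hw hc h1 h2 hx2 hx1 hg' hn
    · exact N.core hN x y u w v c₂ c₁ hu hw hc.symm h2 h1 hx1 hx2 hg' hn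
  · rw [Set.pair_comm x y] at hu hw
    rcases hxor with ⟨hg', hn⟩ | ⟨hg', hn⟩
    · exact N.core hN y x u w v c₁ c₂ hu hw hc h1 h2 hy2 hy1 hg' hn
    · exact N.core hN y x u w v c₂ c₁ hu hw hc.symm h2 h1 hy1 hy2 hg' hn
end

section
/- In a rooted phylogenetic network N on a finite set X, for every nonempty subset Y of X, every lowest common ancestor of Y is below the lowest stable ancestor lsa(Y) of Y. -/
open Relation

section lca_lsa_helpers
variable {V : Type} {r : V → V → Prop}

private lemma chain_mem_transGen' {a b : V} {l : List V} (h : List.Chain r a l) (hb : b ∈ l) :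
    Relation.TransGen r a b := by
  induction l generalizing a with
  | nil => simp at hb
  | cons c t ih =>
    replace h : r a c ∧ List.Chain r c t := List.chain_cons.1 h
    rcases List.mem_cons.1 hb with rfl | hb
    · exact Relation.TransGen.single h.1
    · exact Relation.TransGen.head h.1 (ih h.2 hb)

private lemma chain_nodup' (hacyc : ∀ v, ¬ Relation.TransGen r v v) {a : V} {l : List V}
    (h : List.Chain r a l) : (a :: l).Nodup := by
  induction l generalizing a with
  | nil => simp
  | cons c t ih =>
    replace h : r a c ∧ List.Chain r c t := List.chain_cons.1 h
    refine List.nodup_cons.2 ⟨?_, ih h.2⟩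
    intro ha
    rcases List.mem_cons.1 ha with rfl | ha
    · exact hacyc a (Relation.TransGen.single h.1)
    · exact hacyc a (Relation.TransGen.head h.1 (chain_mem_transGen' h.2 ha))

/-- every member of a chain reaches the last element -/
private lemma chain_mem_reflTransGen_last' {a b c : V} {l : List V} (h : List.Chain r a l)
    (hb : b ∈ a :: l) (hc : (a :: l).getLast? = some c) : Relation.ReflTransGen r b c := by
  induction l generalizing a with
  | nil =>
    simp at hb hc
    subst hb; subst hc; exact Relation.ReflTransGen.refl
  | cons d t ih =>
    replace h : r a d ∧ List.Chain r d t := List.chain_cons.1 h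
    have hc' : (d :: t).getLast? = some c := by
      simpa [List.getLast?_cons_cons] using hc
    rcases List.mem_cons.1 hb with rfl | hb
    · have hlast : (b :: d :: t).getLast (by simp) = c := by
        rwa [List.getLast?_eq_getLast (by simp), Option.some_inj] at hc
      exact List.relationReflTransGen_of_exists_isChain_cons _ (List.chain_cons.2 h) hlast
    · exact ih h.2 hb hc'

private lemma chain_append' {a b : V} {l₁ l₂ : List V} (h₁ : List.Chain r a l₁)
    (hb : (a :: l₁).getLast? = some b) (h₂ : List.Chain r b l₂) :
    List.Chain r a (l₁ ++ l₂) := by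
  induction l₁ generalizing a with
  | nil =>
    simp at hb; subst hb; exact h₂
  | cons c t ih =>
    replace h₁ : r a c ∧ List.Chain r c t := List.chain_cons.1 h₁
    have hb' : (c :: t).getLast? = some b := by
      simpa [List.getLast?_cons_cons] using hb
    exact List.chain_cons.2 ⟨h₁.1, ih h₁.2 hb'⟩

end lca_lsa_helpers

/-- In a rooted phylogenetic network `N` on a finite set `X`, for
every nonempty subset `Y` of `X`, every lowest common ancestor of `Y` is below
the lowest stable ancestor `lsa(Y)` of `Y`. -/
theorem lca_below_lsa {V X : Type} [Fintype V] [Fintype X]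
    (N : PhyloNetwork V X) (Y : Set X) (hY : Y.Nonempty)
    (w : V) (hw : N.IsLSA Y w) (u : V) (hu : N.IsLCA Y u) :
    N.below u w := by
  obtain ⟨x, hx⟩ := hY
  -- w is a common ancestor of Y
  have hwca : N.CommonAncestor Y w := by
    intro y hy
    obtain ⟨l, hc, hlast⟩ := List.exists_isChain_cons_of_relationReflTransGen (N.root_reaches (N.leaf y))
    have hlast' : (N.root :: l).getLast? = some (N.leaf y) := by
      rw [List.getLast?_eq_getLast (by simp), hlast]
    have hp : N.IsDipath (N.root :: l) N.root (N.leaf y) :=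
      ⟨by simp, rfl, hlast', hc, chain_nodup' N.acyclic hc⟩
    have hwp : w ∈ N.root :: l := hw.1 y hy _ hp
    exact chain_mem_reflTransGen_last' hc hwp hlast'
  -- build a simple dipath from the root through u to leaf x
  obtain ⟨l₁, hc₁, hl₁⟩ := List.exists_isChain_cons_of_relationReflTransGen (N.root_reaches u)
  obtain ⟨l₂, hc₂, hl₂⟩ := List.exists_isChain_cons_of_relationReflTransGen (hu.1 hx)
  have hl₁' : (N.root :: l₁).getLast? = some u := by
    rw [List.getLast?_eq_getLast (by simp), hl₁]
  have hl₂' : (u :: l₂).getLast? = some (N.leaf x) := by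
    rw [List.getLast?_eq_getLast (by simp), hl₂]
  have hchain : List.Chain N.Adj N.root (l₁ ++ l₂) := chain_append' hc₁ hl₁' hc₂
  have hPlast : (N.root :: (l₁ ++ l₂)).getLast? = some (N.leaf x) := by
    cases l₂ with
    | nil =>
      simp at hl₂'
      rw [← List.cons_append, List.append_nil, hl₁', hl₂']
    | cons d t =>
      rw [List.getLast?_cons_cons] at hl₂'
      rw [← List.cons_append, List.getLast?_append, hl₂']
      rfl
  have hdisj : ∀ v, v ∈ N.root :: l₁ → v ∈ l₂ → False := by
    intro v hv₁ hv₂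
    have h1 : Relation.ReflTransGen N.Adj v u := chain_mem_reflTransGen_last' hc₁ hv₁ hl₁'
    have h2 : Relation.TransGen N.Adj u v := chain_mem_transGen' hc₂ hv₂
    exact N.acyclic u (h2.trans_left h1)
  have hnodup : (N.root :: (l₁ ++ l₂)).Nodup := by
    rw [← List.cons_append, List.nodup_append]
    refine ⟨chain_nodup' N.acyclic hc₁, (List.nodup_cons.1 (chain_nodup' N.acyclic hc₂)).2, ?_⟩
    intro v hv₁ b hv₂ hvb
    exact hdisj v hv₁ (hvb ▸ hv₂)
  have hP : N.IsDipath (N.root :: (l₁ ++ l₂)) N.root (N.leaf x) :=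
    ⟨by simp, rfl, hPlast, hchain, hnodup⟩
  have hwP : w ∈ N.root :: (l₁ ++ l₂) := hw.1 x hx _ hP
  rw [List.mem_cons, List.mem_append] at hwP
  rcases hwP with rfl | hw₁ | hw₂
  · exact chain_mem_reflTransGen_last' hc₁ List.mem_cons_self hl₁'
  · exact chain_mem_reflTransGen_last' hc₁ (List.mem_cons_of_mem _ hw₁) hl₁'
  · -- w strictly below u: contradicts that u is an LCA
    exfalso
    have htw : Relation.TransGen N.Adj u w := chain_mem_transGen' hc₂ hw₂
    refine hu.2 w hwca ⟨htw.to_reflTransGen, ?_⟩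
    rintro rfl
    exact N.acyclic w htw
end
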